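/- Let N be a semifinite von Neumann algebra with faithful normal semifinite trace τ and let P, Q be projections in N. If T = V|T| ∈ PNQ is (P·Q)-Fredholm with polar decomposition T = V|T|, then the partial isometry V is (P·Q)-Fredholm with Ind(V) = Ind(T), and |T| ∈ QNQ is (Q·Q)-Fredholm of index 0. -/

import Mathlib

open MeasureTheory ContinuousLinearMap
open scoped ENNReal NNReal

noncomputable section

variable {H : Type*} [NormedAddCommGroup H] [InnerProductSpace ℂ H] [CompleteSpace H]

set_option synthInstance.maxHeartbeats 1000000
set_option maxHeartbeats 2000000

section AuxCStar
variable {A : Type*} [CStarAlgebra A]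

lemma isClosed_starCentralizer (S : A) :
    IsClosed ((StarSubalgebra.centralizer ℂ {S} : StarSubalgebra ℂ A) : Set A) := by
  rw [StarSubalgebra.coe_centralizer]
  have : Set.centralizer ({S} ∪ star {S}) =
      ⋂ m ∈ ({S} ∪ star {S} : Set A), {x | m * x = x * m} := by
    ext x; simp [Set.mem_centralizer_iff]
  rw [this]
  exact isClosed_biInter fun m _ => isClosed_eq (by continuity) (by continuity)

lemma commute_cfc_of_commute (a S : A) (ha : IsStarNormal a)
    (h1 : Commute S a) (h2 : Commute S (star a)) (f : ℂ → ℂ) :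
    Commute S (cfc f a) := by
  have hmemS : a ∈ StarSubalgebra.centralizer ℂ ({S} : Set A) := by
    rw [StarSubalgebra.mem_centralizer_iff]
    rintro g rfl
    refine ⟨h1.eq, ?_⟩
    have := congrArg star h2.eq
    simpa [star_mul] using this.symm
  have hmem : cfc f a ∈ StarAlgebra.elemental ℂ a := by
    by_cases hf : ContinuousOn f (spectrum ℂ a)
    · rw [cfc_apply f a ha hf, cfcHom_eq_of_isStarNormal]
      exact SetLike.coe_mem _
    · rw [cfc_apply_of_not_continuousOn a hf]
      exact zero_mem _
  have hle := StarAlgebra.elemental.le_of_mem (isClosed_starCentralizer S) hmemS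
  have hmc := hle hmem
  rw [StarSubalgebra.mem_centralizer_iff] at hmc
  exact (hmc S (Set.mem_singleton S)).1

end AuxCStar

section AuxHilbert
variable {H : Type*} [NormedAddCommGroup H] [InnerProductSpace ℂ H] [CompleteSpace H]

lemma commute_sqrt_of_commute (a S : H →L[ℂ] H) (ha : 0 ≤ a) (h1 : Commute S a) :
    Commute S (CFC.sqrt a) := by
  have hsa : IsSelfAdjoint a := .of_nonneg ha
  have h2 : Commute S (star a) := hsa.symm ▸ h1
  have h3 : CFC.sqrt a =
      cfc (fun z : ℂ => (((fun x : ℝ => (NNReal.sqrt x.toNNReal : ℝ)) z.re : ℝ) : ℂ)) a := by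
    rw [CFC.sqrt, cfcₙ_eq_cfc, cfc_nnreal_eq_real _ a ha, cfc_real_eq_complex]
  rw [h3]
  exact commute_cfc_of_commute a S hsa.isStarNormal h1 h2 _

end AuxHilbert

/-- The orthogonal projection onto the closure of a submodule, as an operator on `H`. -/
noncomputable def projOnto (K : Submodule ℂ H) : H →L[ℂ] H :=
  haveI : CompleteSpace K.topologicalClosure :=
    K.isClosed_topologicalClosure.completeSpace_coe
  K.topologicalClosure.subtypeL ∘L Submodule.orthogonalProjectionOnto K.topologicalClosure

section AuxProj
variable {H : Type*} [NormedAddCommGroup H] [InnerProductSpace ℂ H] [CompleteSpace H]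

lemma projOnto_apply_eq (K : Submodule ℂ H) (x v : H)
    (hv : v ∈ K.topologicalClosure) (ho : x - v ∈ K.topologicalClosureᗮ) :
    projOnto K x = v := by
  haveI : CompleteSpace K.topologicalClosure := K.isClosed_topologicalClosure.completeSpace_coe
  exact Submodule.eq_starProjection_of_mem_orthogonal hv ho

lemma inner_selfAdjoint_move (G : H →L[ℂ] H) (h1 : IsSelfAdjoint G) (a b : H) :
    (inner ℂ (G a) b : ℂ) = inner ℂ a (G b) := by
  conv_lhs => rw [← h1.adjoint_eq]
  exact ContinuousLinearMap.adjoint_inner_left G b a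

lemma projOnto_of_proj (G : H →L[ℂ] H) (h1 : IsSelfAdjoint G) (h2 : G ∘L G = G) :
    projOnto (LinearMap.range (G : H →ₗ[ℂ] H)) = G := by
  have h2' : ∀ y, G (G y) = G y := fun y => congrFun (congrArg DFunLike.coe h2) y
  have hcl : IsClosed ((LinearMap.range (G : H →ₗ[ℂ] H) : Submodule ℂ H) : Set H) := by
    have : (LinearMap.range (G : H →ₗ[ℂ] H) : Submodule ℂ H) = LinearMap.ker ((1 - G : H →L[ℂ] H) : H →ₗ[ℂ] H) := by
      ext x
      simp only [LinearMap.mem_range, LinearMap.mem_ker, ContinuousLinearMap.coe_coe, ContinuousLinearMap.coe_sub',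
        Pi.sub_apply, ContinuousLinearMap.one_apply, sub_eq_zero]
      constructor
      · rintro ⟨y, rfl⟩; rw [h2' y]
      · intro h; exact ⟨x, h.symm⟩
    rw [this]
    exact isClosed_ker _
  have htc : (LinearMap.range (G : H →ₗ[ℂ] H) : Submodule ℂ H).topologicalClosure = LinearMap.range (G : H →ₗ[ℂ] H) :=
    hcl.submodule_topologicalClosure_eq
  refine ContinuousLinearMap.ext fun x => projOnto_apply_eq _ x (G x) ?_ ?_
  · rw [htc]; exact ⟨x, rfl⟩
  · rw [htc, Submodule.mem_orthogonal]
    rintro u ⟨y, rfl⟩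
    rw [ContinuousLinearMap.coe_coe, inner_selfAdjoint_move G h1]
    have : G (x - G x) = 0 := by rw [map_sub, h2' x, sub_self]
    rw [this, inner_zero_right]

lemma eq_zero_of_vanish (A D : H →L[ℂ] H) (hA : IsSelfAdjoint A)
    (h1 : D ∘L A = 0) (h2 : ∀ x, A x = 0 → D x = 0) : D = 0 := by
  have hker : LinearMap.ker (A : H →ₗ[ℂ] H) = (LinearMap.range (A : H →ₗ[ℂ] H))ᗮ := by
    ext x
    rw [Submodule.mem_orthogonal]
    constructor
    · rintro hx u ⟨y, rfl⟩
      rw [ContinuousLinearMap.coe_coe, inner_selfAdjoint_move A hA, ← ContinuousLinearMap.coe_coe A, LinearMap.mem_ker.mp hx, inner_zero_right]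
    · intro h
      have := h (A (A x)) ⟨A x, rfl⟩
      rw [inner_selfAdjoint_move A hA] at this
      exact LinearMap.mem_ker.mpr (inner_self_eq_zero.mp this)
  have horth : (LinearMap.ker (A : H →ₗ[ℂ] H))ᗮ ≤ LinearMap.ker (D : H →ₗ[ℂ] H) := by
    rw [hker, Submodule.orthogonal_orthogonal_eq_closure]
    refine Submodule.topologicalClosure_minimal _ ?_ (isClosed_ker D)
    rintro u ⟨y, rfl⟩
    exact LinearMap.mem_ker.mpr (congrFun (congrArg DFunLike.coe h1) y)
  haveI : CompleteSpace (LinearMap.ker (A : H →ₗ[ℂ] H)) := (isClosed_ker A).completeSpace_coe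
  ext x
  obtain ⟨y, hy, z, hz, rfl⟩ := (LinearMap.ker (A : H →ₗ[ℂ] H)).exists_add_mem_mem_orthogonal x
  have hz' : D z = 0 := horth hz
  simp [map_add, h2 y (LinearMap.mem_ker.mp hy), hz']

end AuxProj

/-- A (self-adjoint, idempotent) projection operator. -/
def IsProjOp (P : H →L[ℂ] H) : Prop := IsSelfAdjoint P ∧ P ∘L P = P

/-- A faithful normal semifinite trace on a von Neumann algebra `N`, together with its
real-valued extension `τℝ` to trace-class operators. -/
structure Trace (N : VonNeumannAlgebra H) where
  τ : (H →L[ℂ] H) → ℝ≥0∞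
  τℝ : (H →L[ℂ] H) → ℝ
  map_add : ∀ S T : H →L[ℂ] H, S.IsPositive → T.IsPositive → τ (S + T) = τ S + τ T
  map_smul : ∀ (c : ℝ≥0) (T : H →L[ℂ] H), T.IsPositive → τ ((c : ℝ) • T) = c * τ T
  tracial : ∀ T : H →L[ℂ] H, τ (adjoint T ∘L T) = τ (T ∘L adjoint T)
  faithful : ∀ T : H →L[ℂ] H, T.IsPositive → τ T = 0 → T = 0
  semifinite : ∀ P : H →L[ℂ] H, P ∈ N → IsProjOp P → P ≠ 0 →
    ∃ E : H →L[ℂ] H, E ∈ N ∧ IsProjOp E ∧ P ∘L E = E ∧ E ≠ 0 ∧ τ E < ∞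
  τℝ_pos : ∀ T : H →L[ℂ] H, T.IsPositive → τℝ T = (τ T).toReal
  τℝ_add : ∀ S T A B : H →L[ℂ] H, A.IsPositive → B.IsPositive →
    A ∘L A = adjoint S ∘L S → B ∘L B = adjoint T ∘L T → τ A < ∞ → τ B < ∞ →
    τℝ (S + T) = τℝ S + τℝ T
  τℝ_tracial : ∀ S T A : H →L[ℂ] H, A.IsPositive → A ∘L A = adjoint S ∘L S → τ A < ∞ →
    τℝ (S ∘L T) = τℝ (T ∘L S)

/-- Membership in the "skew corner" `P N Q`. -/
def MemCorner (N : VonNeumannAlgebra H) (P Q T : H →L[ℂ] H) : Prop :=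
  T ∈ N ∧ P ∘L T ∘L Q = T

/-- The projection `N_T^Q` onto `ker T ∩ range Q`. -/
noncomputable def kerProjIn (T Q : H →L[ℂ] H) : H →L[ℂ] H :=
  projOnto (LinearMap.ker (T : H →ₗ[ℂ] H) ⊓ LinearMap.range (Q : H →ₗ[ℂ] H))

variable {N : VonNeumannAlgebra H}

/-- `(P·Q)`-Fredholm for a bounded operator `T ∈ PNQ`. -/
def IsPQFredholm (tr : Trace N) (P Q T : H →L[ℂ] H) : Prop :=
  tr.τ (kerProjIn T Q) < ∞ ∧ tr.τ (kerProjIn (adjoint T) P) < ∞ ∧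
  ∃ E : H →L[ℂ] H, E ∈ N ∧ IsProjOp E ∧ P ∘L E = E ∧ tr.τ E < ∞ ∧
    LinearMap.range ((P - E : H →L[ℂ] H) : H →ₗ[ℂ] H) ≤ LinearMap.range (T : H →ₗ[ℂ] H)

/-- The `(P·Q)`-index `Ind(T) = τ(N_T^Q) − τ(N_{T*}^P)`. -/
noncomputable def pqIndex (tr : Trace N) (P Q T : H →L[ℂ] H) : ℝ :=
  (tr.τ (kerProjIn T Q)).toReal - (tr.τ (kerProjIn (adjoint T) P)).toReal

/-- The ideal `K_N` of `τ`-compact operators: the norm closure of the span of the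
`τ`-finite projections in `N`. -/
def tauCompact (tr : Trace N) : Set (H →L[ℂ] H) :=
  closure ((Submodule.span ℂ
    {E : H →L[ℂ] H | E ∈ N ∧ IsProjOp E ∧ tr.τ E < ∞} : Submodule ℂ (H →L[ℂ] H)) :
    Set (H →L[ℂ] H))


/-- `T = V|T|` is a polar decomposition of `T`: `|T| = A` is the positive square root of
`T*T`, `V` is a partial isometry with `ker V = ker A`, and `T = V ∘ A`. -/
def IsPolarDecomp (T V A : H →L[ℂ] H) : Prop :=
  A.IsPositive ∧ A ∘L A = adjoint T ∘L T ∧ T = V ∘L A ∧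
  V ∘L adjoint V ∘L V = V ∧ LinearMap.ker (V : H →ₗ[ℂ] H) = LinearMap.ker (A : H →ₗ[ℂ] H)

/-- If `T = V|T| ∈ PNQ` is `(P·Q)`-Fredholm, then the partial isometry `V` is
`(P·Q)`-Fredholm with `Ind(V) = Ind(T)`, and `|T| ∈ QNQ` is `(Q·Q)`-Fredholm of index `0`. -/
theorem polar_parts_fredholm (tr : Trace N) (P Q T V A : H →L[ℂ] H)
    (hP : P ∈ N) (hPproj : IsProjOp P) (hQ : Q ∈ N) (hQproj : IsProjOp Q)
    (hT : MemCorner N P Q T) (hpolar : IsPolarDecomp T V A)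
    (hF : IsPQFredholm tr P Q T) :
    MemCorner N P Q V ∧ IsPQFredholm tr P Q V ∧ pqIndex tr P Q V = pqIndex tr P Q T ∧
      MemCorner N Q Q A ∧ IsPQFredholm tr Q Q A ∧ pqIndex tr Q Q A = 0 := by
  classical
  obtain ⟨hApos, hAA', hTVA', hVVV', hkerVA'⟩ := hpolar
  have hAsa : IsSelfAdjoint A := hApos.isSelfAdjoint
  have hAA : A * A = star T * T := hAA'
  have hTVA : T = V * A := hTVA'
  have hVVV : V * (star V * V) = V := hVVV'
  have hQ2 : Q * Q = Q := hQproj.2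
  have hQsa : IsSelfAdjoint Q := hQproj.1
  have hP2 : P * P = P := hPproj.2
  have hPsa : IsSelfAdjoint P := hPproj.1
  have hTN : T ∈ N := hT.1
  have hPTQ : P * (T * Q) = T := hT.2
  have app : ∀ {S₁ S₂ : H →L[ℂ] H}, S₁ = S₂ → ∀ x, S₁ x = S₂ x :=
    fun h x => by rw [h]
  have hkerVA : ∀ x : H, V x = 0 ↔ A x = 0 := fun x => by
    have : x ∈ LinearMap.ker (V : H →ₗ[ℂ] H) ↔ x ∈ LinearMap.ker (A : H →ₗ[ℂ] H) := by rw [hkerVA']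
    simpa [LinearMap.mem_ker] using this
  have hTQ : T * Q = T := by
    conv_lhs => rw [← hPTQ]
    rw [mul_assoc P (T * Q) Q, mul_assoc T Q Q, hQ2, hPTQ]
  have hPT : P * T = T := by
    conv_lhs => rw [← hPTQ]
    rw [← mul_assoc P P (T * Q), hP2, hPTQ]
  have hVV2 : (star V * V) * (star V * V) = star V * V := by
    calc (star V * V) * (star V * V) = star V * (V * (star V * V)) := by rw [mul_assoc]
    _ = star V * V := by rw [hVVV]
  have hkerVV : ∀ x, (star V * V) x = 0 ↔ V x = 0 := fun x => by
    constructor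
    · intro h
      have e : (inner ℂ ((star V * V) x) x : ℂ) = inner ℂ (V x) (V x) := by
        rw [ContinuousLinearMap.mul_apply]
        exact ContinuousLinearMap.adjoint_inner_left V x (V x)
      rw [h, inner_zero_left] at e
      exact inner_self_eq_zero.mp e.symm
    · intro h; rw [ContinuousLinearMap.mul_apply, h, map_zero]
  have hAVV : A * (star V * V) = A := by
    have hop : (star V * V) * (1 - star V * V) = 0 := by
      rw [mul_sub, mul_one, hVV2, sub_self]
    have hAG : A * (1 - star V * V) = 0 := by
      ext x
      have h1 : (star V * V) ((1 - star V * V) x) = 0 := by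
        rw [← ContinuousLinearMap.mul_apply, hop, ContinuousLinearMap.zero_apply]
      have hAx : A ((1 - star V * V) x) = 0 := (hkerVA _).mp ((hkerVV _).mp h1)
      rw [ContinuousLinearMap.mul_apply, hAx, ContinuousLinearMap.zero_apply]
    rw [mul_sub, mul_one, sub_eq_zero] at hAG
    exact hAG.symm
  have hVVA : (star V * V) * A = A := by
    have := congrArg star hAVV
    simpa [star_mul, star_star, hAsa.star_eq, mul_assoc] using this
  have hsVT : star V * T = A := by rw [hTVA, ← mul_assoc, hVVA]
  have hAQ : A * Q = A := by rw [← hsVT, mul_assoc, hTQ]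
  have hQA : Q * A = A := by
    have := congrArg star hAQ
    simpa [star_mul, hAsa.star_eq, hQsa.star_eq] using this
  have hVQ : V * Q = V := by
    ext x
    have h1 : A (Q x - x) = 0 := by
      have h2 := app hAQ x
      rw [ContinuousLinearMap.mul_apply] at h2
      rw [map_sub, h2, sub_self]
    have h3 : V (Q x - x) = 0 := (hkerVA _).mpr h1
    rw [map_sub] at h3
    rw [ContinuousLinearMap.mul_apply]
    exact sub_eq_zero.mp h3
  have hPV : P * V = V := by
    have h0 : P * V - V = 0 := by
      refine eq_zero_of_vanish A (P * V - V) hAsa ?_ ?_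
      · show (P * V - V) * A = 0
        rw [sub_mul, mul_assoc, ← hTVA, hPT, sub_self]
      · intro x hx
        have hVx : V x = 0 := (hkerVA x).mpr hx
        simp [ContinuousLinearMap.sub_apply, ContinuousLinearMap.mul_apply, hVx]
    exact sub_eq_zero.mp h0
  have hkerTA : ∀ x, T x = 0 ↔ A x = 0 := fun x => by
    have key : (inner ℂ (A x) (A x) : ℂ) = inner ℂ (T x) (T x) := by
      have e1 : (inner ℂ ((A * A) x) x : ℂ) = inner ℂ (A x) (A x) := by
        rw [ContinuousLinearMap.mul_apply]
        exact inner_selfAdjoint_move A hAsa (A x) x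
      have e2 : (inner ℂ ((star T * T) x) x : ℂ) = inner ℂ (T x) (T x) := by
        rw [ContinuousLinearMap.mul_apply]
        exact ContinuousLinearMap.adjoint_inner_left T x (T x)
      have emid : (inner ℂ ((A * A) x) x : ℂ) = inner ℂ ((star T * T) x) x :=
        congrArg (fun S : H →L[ℂ] H => (inner ℂ (S x) x : ℂ)) hAA
      exact e1.symm.trans (emid.trans e2)
    constructor
    · intro h
      have hz : (inner ℂ (A x) (A x) : ℂ) = 0 := by rw [key, h, inner_zero_left]
      exact inner_self_eq_zero.mp hz
    · intro h
      have hz : (inner ℂ (T x) (T x) : ℂ) = 0 := by rw [← key, h, inner_zero_left]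
      exact inner_self_eq_zero.mp hz
  have hkerVT : ∀ x, V x = 0 ↔ T x = 0 := fun x => (hkerVA x).trans (hkerTA x).symm
  have hTs : star T = A * star V := by rw [hTVA, star_mul, hAsa.star_eq]
  have hsVVsV : (star V * V) * star V = star V := by
    have := congrArg star hVVV
    simpa [star_mul, star_star, mul_assoc] using this
  have hkerTsVs : ∀ x, (star T) x = 0 ↔ (star V) x = 0 := fun x => by
    constructor
    · intro h
      have h1 : A ((star V) x) = 0 := by
        rw [← ContinuousLinearMap.mul_apply, ← hTs]; exact h
      have h2 : V ((star V) x) = 0 := (hkerVA _).mpr h1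
      have h3 := app hsVVsV x
      simp only [ContinuousLinearMap.mul_apply] at h3
      rw [← h3, h2, map_zero]
    · intro h
      rw [hTs, ContinuousLinearMap.mul_apply, h, map_zero]
  have ekerVT : LinearMap.ker (V : H →ₗ[ℂ] H) = LinearMap.ker (T : H →ₗ[ℂ] H) := by
    ext x; simpa [LinearMap.mem_ker] using hkerVT x
  have ekerAT : LinearMap.ker (A : H →ₗ[ℂ] H) = LinearMap.ker (T : H →ₗ[ℂ] H) := by
    ext x
    simp only [LinearMap.mem_ker]
    exact (hkerTA x).symm
  have ekeradj : LinearMap.ker ((adjoint V) : H →ₗ[ℂ] H) = LinearMap.ker ((adjoint T) : H →ₗ[ℂ] H) := by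
    ext x
    simp only [LinearMap.mem_ker]
    exact (hkerTsVs x).symm
  have kp1 : kerProjIn V Q = kerProjIn T Q := by unfold kerProjIn; rw [ekerVT]
  have kp2 : kerProjIn A Q = kerProjIn T Q := by unfold kerProjIn; rw [ekerAT]
  have kp3 : kerProjIn (adjoint V) P = kerProjIn (adjoint T) P := by
    unfold kerProjIn; rw [ekeradj]
  have hadjA : adjoint A = A := hAsa.adjoint_eq
  have kp4 : kerProjIn (adjoint A) Q = kerProjIn A Q := by rw [hadjA]
  -- membership of V and A in N
  have hcomm : ∀ S ∈ Set.centralizer (N : Set (H →L[ℂ] H)),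
      S * A = A * S ∧ S * V = V * S := by
    intro S hS
    have hmem := Set.mem_centralizer_iff.mp hS
    have hST : T * S = S * T := hmem T hTN
    have hSTs : star T * S = S * star T := hmem (star T) (star_mem hTN)
    have hSB : Commute S (star T * T) := by
      show S * (star T * T) = (star T * T) * S
      rw [← mul_assoc, ← hSTs, mul_assoc, ← hST, ← mul_assoc]
    have hApos0 : (0 : H →L[ℂ] H) ≤ A := (nonneg_iff_isPositive A).mpr hApos
    have hsqrt : CFC.sqrt (star T * T) = A := CFC.sqrt_unique hAA hApos0
    have hSA : S * A = A * S := by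
      have hc := commute_sqrt_of_commute (star T * T) S (star_mul_self_nonneg T) hSB
      rw [hsqrt] at hc
      exact hc
    refine ⟨hSA, ?_⟩
    have h0 : S * V - V * S = 0 := by
      refine eq_zero_of_vanish A (S * V - V * S) hAsa ?_ ?_
      · show (S * V - V * S) * A = 0
        have e1 : (S * V) * A = S * T := by rw [mul_assoc, ← hTVA]
        have e2 : (V * S) * A = S * T := by
          rw [mul_assoc, hSA, ← mul_assoc, ← hTVA, hST]
        rw [sub_mul, e1, e2, sub_self]
      · intro x hx
        have hVx : V x = 0 := (hkerVA x).mpr hx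
        have hASx : A (S x) = 0 := by
          rw [← ContinuousLinearMap.mul_apply, ← hSA, ContinuousLinearMap.mul_apply, hx,
            map_zero]
        have hVSx : V (S x) = 0 := (hkerVA _).mpr hASx
        simp [ContinuousLinearMap.sub_apply, ContinuousLinearMap.mul_apply, hVx, hVSx]
    exact sub_eq_zero.mp h0
  have hVN : V ∈ N := by
    have hmm : V ∈ Set.centralizer (Set.centralizer (N : Set (H →L[ℂ] H))) :=
      Set.mem_centralizer_iff.mpr fun S hS => (hcomm S hS).2
    rw [N.centralizer_centralizer] at hmm
    exact hmm
  have hAN : A ∈ N := by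
    have hmm : A ∈ Set.centralizer (Set.centralizer (N : Set (H →L[ℂ] H))) :=
      Set.mem_centralizer_iff.mpr fun S hS => (hcomm S hS).1
    rw [N.centralizer_centralizer] at hmm
    exact hmm
  -- unpack Fredholmness of T
  obtain ⟨hτ1, hτ2, E, hEN, hEproj, hPE', hEfin, hErange⟩ := hF
  have hEsa : IsSelfAdjoint E := hEproj.1
  have hE2 : E * E = E := hEproj.2
  have hPE : P * E = E := hPE'
  have hEP : E * P = E := by
    have := congrArg star hPE
    simpa [star_mul, hPsa.star_eq, hEsa.star_eq] using this
  have hrangePE : ∀ x : H, ∃ w, T w = (P - E) x := fun x => hErange ⟨x, rfl⟩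
  have hVVsV : (V * star V) * V = V := by rw [mul_assoc, hVVV]
  have hVVsT : (V * star V) * T = T := by rw [hTVA, ← mul_assoc, hVVsV]
  have hVVsPE : (V * star V) * (P - E) = P - E := by
    ext x
    obtain ⟨w, hw⟩ := hrangePE x
    calc ((V * star V) * (P - E)) x = (V * star V) ((P - E) x) :=
          ContinuousLinearMap.mul_apply _ _ x
    _ = (V * star V) (T w) := by rw [hw]
    _ = ((V * star V) * T) w := (ContinuousLinearMap.mul_apply _ _ w).symm
    _ = T w := by rw [hVVsT]
    _ = (P - E) x := hw
  have hPE2 : (P - E) * (P - E) = P - E := by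
    rw [sub_mul, mul_sub, mul_sub, hP2, hPE, hEP, hE2, sub_self, sub_zero]
  have hPEsa : IsSelfAdjoint (P - E) := hPsa.sub hEsa
  have hXX : ((P - E) * V) * (star V * ((P - E) * V)) = (P - E) * V := by
    calc ((P - E) * V) * (star V * ((P - E) * V))
        = (P - E) * (V * (star V * ((P - E) * V))) := by rw [mul_assoc]
    _ = (P - E) * ((V * star V) * ((P - E) * V)) := by rw [← mul_assoc V (star V) _]
    _ = (P - E) * (((V * star V) * (P - E)) * V) := by rw [mul_assoc (V * star V) (P - E) V]
    _ = (P - E) * ((P - E) * V) := by rw [hVVsPE]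
    _ = ((P - E) * (P - E)) * V := by rw [← mul_assoc]
    _ = (P - E) * V := by rw [hPE2]
  have hRR : (star V * ((P - E) * V)) * (star V * ((P - E) * V)) = star V * ((P - E) * V) := by
    calc (star V * ((P - E) * V)) * (star V * ((P - E) * V))
        = star V * (((P - E) * V) * (star V * ((P - E) * V))) := by rw [mul_assoc]
    _ = star V * ((P - E) * V) := by rw [hXX]
  have hRsa : IsSelfAdjoint (star V * ((P - E) * V)) := by
    show star _ = _
    simp [star_mul, star_star, hPEsa.star_eq, mul_assoc]
  have hQsV : Q * star V = star V := by
    have := congrArg star hVQ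
    simpa [star_mul, hQsa.star_eq] using this
  have hQR : Q * (star V * ((P - E) * V)) = star V * ((P - E) * V) := by
    rw [← mul_assoc, hQsV]
  have hRQ : (star V * ((P - E) * V)) * Q = star V * ((P - E) * V) := by
    rw [mul_assoc (star V) ((P - E) * V) Q, mul_assoc (P - E) V Q, hVQ]
  have hE'2 : (Q - star V * ((P - E) * V)) * (Q - star V * ((P - E) * V))
      = Q - star V * ((P - E) * V) := by
    rw [sub_mul, mul_sub, mul_sub, hQ2, hQR, hRQ, hRR, sub_self, sub_zero]
  have hE'sa : IsSelfAdjoint (Q - star V * ((P - E) * V)) := hQsa.sub hRsa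
  have hE'N : (Q - star V * ((P - E) * V)) ∈ N :=
    sub_mem hQ (mul_mem (star_mem hVN) (mul_mem (sub_mem hP hEN) hVN))
  have hQE' : Q * (Q - star V * ((P - E) * V)) = Q - star V * ((P - E) * V) := by
    rw [mul_sub, hQ2, hQR]
  -- decomposition  Q - R = (Q - V*V) + V*E*V
  have hPEV : (P - E) * V = V - E * V := by rw [sub_mul, hPV]
  have hE'decomp : Q - star V * ((P - E) * V)
      = (Q - star V * V) + star V * (E * V) := by
    rw [hPEV, mul_sub]
    abel
  -- the projection Q - V*V equals kerProjIn A Q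
  have hQsVV : Q * (star V * V) = star V * V := by rw [← mul_assoc, hQsV]
  have hsVVQ : (star V * V) * Q = star V * V := by rw [mul_assoc, hVQ]
  have hG2 : (Q - star V * V) * (Q - star V * V) = Q - star V * V := by
    rw [sub_mul, mul_sub, mul_sub, hQ2, hQsVV, hsVVQ, hVV2, sub_self, sub_zero]
  have hGsa : IsSelfAdjoint (Q - star V * V) := by
    refine hQsa.sub ?_
    show star _ = _
    rw [star_mul, star_star]
  have hAG0 : A * (Q - star V * V) = 0 := by rw [mul_sub, hAQ, hAVV, sub_self]
  have hQG : Q * (Q - star V * V) = Q - star V * V := by rw [mul_sub, hQ2, hQsVV]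
  have hrangeG : (LinearMap.ker (A : H →ₗ[ℂ] H) ⊓ LinearMap.range (Q : H →ₗ[ℂ] H) : Submodule ℂ H)
      = LinearMap.range ((Q - star V * V : H →L[ℂ] H) : H →ₗ[ℂ] H) := by
    ext x
    simp only [Submodule.mem_inf, LinearMap.mem_ker, LinearMap.mem_range, ContinuousLinearMap.coe_coe]
    constructor
    · rintro ⟨h1, y, rfl⟩
      refine ⟨Q y, ?_⟩
      have hQQy : Q (Q y) = Q y := by
        rw [← ContinuousLinearMap.mul_apply, hQ2]
      have hVQy : V (Q y) = 0 := (hkerVA _).mpr h1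
      have hsVVQy : (star V * V) (Q y) = 0 := by
        rw [ContinuousLinearMap.mul_apply, hVQy, map_zero]
      rw [ContinuousLinearMap.sub_apply, hQQy, hsVVQy, sub_zero]
    · rintro ⟨y, rfl⟩
      constructor
      · rw [← ContinuousLinearMap.mul_apply, hAG0, ContinuousLinearMap.zero_apply]
      · exact ⟨(Q - star V * V) y, by
          rw [← ContinuousLinearMap.mul_apply, hQG]⟩
  have hGproj : kerProjIn A Q = Q - star V * V := by
    unfold kerProjIn
    rw [hrangeG]
    exact projOnto_of_proj _ hGsa hG2
  have posOf : ∀ X : H →L[ℂ] H, IsSelfAdjoint X → X * X = X → X.IsPositive := by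
    intro X hs h2
    apply (nonneg_iff_isPositive X).mp
    have : star X * X = X := by rw [hs.star_eq, h2]
    rw [← this]
    exact star_mul_self_nonneg X
  have hGpos : (Q - star V * V).IsPositive := posOf _ hGsa hG2
  have hFeq : star (E * V) * (E * V) = star V * (E * V) := by
    rw [star_mul, hEsa.star_eq, mul_assoc, ← mul_assoc E E V, hE2]
  have hFpos : (star V * (E * V)).IsPositive := by
    rw [← hFeq]
    exact (nonneg_iff_isPositive _).mp (star_mul_self_nonneg _)
  -- τ of the E*V part is finite
  have hEVVE : (E * V) * (star V * E) = E * ((V * star V) * E) := by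
    rw [mul_assoc E V (star V * E), ← mul_assoc V (star V) E]
  have htr' : tr.τ (star V * (E * V)) = tr.τ (E * ((V * star V) * E)) := by
    have htr := tr.tracial (E * V)
    have e1 : tr.τ (star (E * V) * (E * V)) = tr.τ ((E * V) * star (E * V)) := htr
    rw [hFeq] at e1
    rw [e1]
    rw [show star (E * V) = star V * E by rw [star_mul, hEsa.star_eq], hEVVE]
  have hVVs2 : (V * star V) * (V * star V) = V * star V := by
    calc (V * star V) * (V * star V) = ((V * (star V * V)) * star V) := by
          rw [mul_assoc V (star V) (V * star V), ← mul_assoc (star V) V (star V),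
            ← mul_assoc V (star V * V) (star V)]
    _ = V * star V := by rw [hVVV]
  have hW2 : (1 - V * star V) * (1 - V * star V) = 1 - V * star V := by
    rw [sub_mul, one_mul, mul_sub, mul_one, hVVs2, sub_self, sub_zero]
  have hWsa : IsSelfAdjoint (1 - V * star V) := by
    have hvv : IsSelfAdjoint (V * star V) := by
      show star _ = _
      rw [star_mul, star_star]
    exact (IsSelfAdjoint.one _).sub hvv
  have hdec : E * ((V * star V) * E) + E * ((1 - V * star V) * E) = E := by
    rw [← mul_add, ← add_mul]
    have : V * star V + (1 - V * star V) = 1 := by abel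
    rw [this, one_mul, hE2]
  have hpos1 : (E * ((V * star V) * E)).IsPositive := by
    have h' : star (star V * E) * (star V * E) = E * ((V * star V) * E) := by
      rw [star_mul, star_star, hEsa.star_eq]
      exact hEVVE
    rw [← h']
    exact (nonneg_iff_isPositive _).mp (star_mul_self_nonneg _)
  have hpos2 : (E * ((1 - V * star V) * E)).IsPositive := by
    have h' : star ((1 - V * star V) * E) * ((1 - V * star V) * E)
        = E * ((1 - V * star V) * E) := by
      rw [star_mul, hEsa.star_eq, hWsa.star_eq, mul_assoc E _ _,
        ← mul_assoc (1 - V * star V) (1 - V * star V) E, hW2]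
    rw [← h']
    exact (nonneg_iff_isPositive _).mp (star_mul_self_nonneg _)
  have hsum := tr.map_add _ _ hpos1 hpos2
  rw [hdec] at hsum
  have hle : tr.τ (E * ((V * star V) * E)) ≤ tr.τ E := by
    rw [hsum]; exact le_self_add
  have hτF : tr.τ (star V * (E * V)) < ∞ := by
    rw [htr']
    exact lt_of_le_of_lt hle hEfin
  have hτG : tr.τ (Q - star V * V) < ∞ := by
    rw [← hGproj, kp2]
    exact hτ1
  have hτE' : tr.τ (Q - star V * ((P - E) * V)) < ∞ := by
    rw [hE'decomp, tr.map_add _ _ hGpos hFpos]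
    exact ENNReal.add_lt_top.mpr ⟨hτG, hτF⟩
  -- assemble everything
  refine ⟨⟨hVN, ?_⟩, ⟨?_, ?_, E, hEN, hEproj, hPE', hEfin, ?_⟩, ?_, ⟨hAN, ?_⟩,
    ⟨?_, ?_, Q - star V * ((P - E) * V), hE'N, ⟨hE'sa, hE'2⟩, hQE', hτE', ?_⟩, ?_⟩
  · show P * (V * Q) = V
    rw [hVQ, hPV]
  · rw [kp1]; exact hτ1
  · rw [kp3]; exact hτ2
  · rintro y ⟨x, rfl⟩
    obtain ⟨w, hw⟩ := hrangePE x
    refine ⟨A w, ?_⟩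
    show V (A w) = (P - E) x
    rw [← ContinuousLinearMap.mul_apply, ← hTVA, hw]
  · unfold pqIndex
    rw [kp1, kp3]
  · show Q * (A * Q) = A
    rw [hAQ, hQA]
  · rw [kp2]; exact hτ1
  · rw [kp4, kp2]; exact hτ1
  · rw [sub_sub_cancel]
    rintro y ⟨x, rfl⟩
    obtain ⟨w, hw⟩ := hrangePE (V x)
    refine ⟨w, ?_⟩
    show A w = (star V * ((P - E) * V)) x
    rw [← hsVT, ContinuousLinearMap.mul_apply, hw, ContinuousLinearMap.mul_apply,
      ContinuousLinearMap.mul_apply]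
  · unfold pqIndex
    rw [kp4]
    exact sub_self _


end
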